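/- Let A be an abelian group and x an automorphism of A of finite order q such that [a,_n x] = 1 for all a in A (for some n ≥ 1). Then x fixes every element of the form a^{q^{n-1}} with a in A, i.e., [A^{q^{n-1}}, x] = 1. -/

import Mathlib

lemma ring_aux {R : Type*} [Ring R] (d : R) (q : ℕ) (hq : 1 ≤ q)
    (h : (1 + d) ^ q = 1) : ∃ g : R, Commute d g ∧ (q : R) * d = d ^ 2 * g := by
  obtain ⟨m, rfl⟩ := Nat.exists_eq_add_of_le hq
  rw [add_comm 1 d, (Commute.one_right d).add_pow] at h
  simp only [one_pow, mul_one] at h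
  rw [Finset.sum_range_succ', add_comm 1 m, Finset.sum_range_succ'] at h
  simp only [pow_zero, pow_one, Nat.choose_zero_right, Nat.choose_one_right,
    Nat.cast_one, mul_one, zero_add] at h
  rw [← (Nat.cast_commute (m + 1) d).eq] at h
  have h2 : ∑ k ∈ Finset.range m, d ^ (k + 1 + 1) * (((m + 1).choose (k + 1 + 1) : ℕ) : R)
      + ((m + 1 : ℕ) : R) * d = 0 := by rwa [add_eq_right] at h
  refine ⟨-∑ i ∈ Finset.range m, d ^ i * (((m + 1).choose (i + 1 + 1) : ℕ) : R), ?_, ?_⟩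
  · exact Commute.neg_right <| Commute.sum_right _ _ _ fun i _ =>
      ((Commute.refl d).pow_right i).mul_right (Nat.commute_cast d _)
  · have key : d ^ 2 * -∑ i ∈ Finset.range m, d ^ i * (((m + 1).choose (i + 1 + 1) : ℕ) : R)
        = -∑ k ∈ Finset.range m, d ^ (k + 1 + 1) * (((m + 1).choose (k + 1 + 1) : ℕ) : R) := by
      rw [mul_neg, Finset.mul_sum, neg_inj]
      refine Finset.sum_congr rfl fun i _ => ?_
      rw [← mul_assoc, ← pow_add, add_comm 2 i]
    rw [key, add_comm 1 m]
    exact eq_neg_of_add_eq_zero_right h2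

lemma ring_aux2 {R : Type*} [Ring R] (d : R) (q : ℕ) (hq : 1 ≤ q)
    (h : (1 + d) ^ q = 1) (j : ℕ) :
    ∃ g : R, (q : R) ^ j * d = d ^ (j + 1) * g := by
  obtain ⟨g, hcomm, hg⟩ := ring_aux d q hq h
  induction j with
  | zero => exact ⟨1, by simp⟩
  | succ j ih =>
      obtain ⟨h', hh⟩ := ih
      refine ⟨g * h', ?_⟩
      calc (q : R) ^ (j + 1) * d = (q : R) * ((q : R) ^ j * d) := by
            rw [← mul_assoc, ← pow_succ']
        _ = (q : R) * (d ^ (j + 1) * h') := by rw [hh]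
        _ = ((q : R) * d) * (d ^ j * h') := by
            rw [pow_succ', mul_assoc, ← mul_assoc]
        _ = (d ^ 2 * g) * (d ^ j * h') := by rw [hg]
        _ = d ^ 2 * (g * d ^ j) * h' := by
            rw [mul_assoc (d ^ 2), ← mul_assoc g, ← mul_assoc]
        _ = d ^ 2 * (d ^ j * g) * h' := by rw [(hcomm.symm.pow_right j).eq]
        _ = d ^ (j + 1 + 1) * (g * h') := by
            rw [← mul_assoc, ← pow_add, add_comm 2 j, mul_assoc]


/-- Iterated commutator `[a,_n x]` of an element `a` of an abelian group with an
automorphism `x`, where `[a, x] = a⁻¹ * x a`. -/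
def autEngel {A : Type*} [CommGroup A] (x : MulAut A) (a : A) : ℕ → A
  | 0 => a
  | n + 1 => (autEngel x a n)⁻¹ * x (autEngel x a n)

/-- Casolo's lemma: if `x` is an automorphism of an abelian group `A` of finite order `q`
with `[a,_n x] = 1` for all `a` (some `n ≥ 1`), then `x` fixes all `q^{n-1}`-th powers. -/
theorem stmt5 {A : Type*} [CommGroup A] (x : MulAut A) (q n : ℕ)
    (hq : orderOf x = q) (hqpos : 0 < q) (hn : 1 ≤ n)
    (hengel : ∀ a : A, autEngel x a n = 1) :
    ∀ a : A, x (a ^ q ^ (n - 1)) = a ^ q ^ (n - 1) := by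
  intro a
  set M := Additive A
  set X : Module.End ℤ M := (MonoidHom.toAdditive x.toMonoidHom).toIntLinearMap with hX
  set d : Module.End ℤ M := X - 1 with hd
  have hXapp : ∀ b : A, X (Additive.ofMul b) = Additive.ofMul (x b) := fun _ => rfl
  have hdapp : ∀ c : M, d c = Additive.ofMul ((Additive.toMul c)⁻¹ * x (Additive.toMul c)) := by
    intro c
    show X c - c = _
    rw [ofMul_mul, ofMul_inv]
    exact sub_eq_neg_add (X c) c
  -- iterated
  have hiter : ∀ m (b : A), autEngel x b m = Additive.toMul ((d ^ m) (Additive.ofMul b)) := by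
    intro m
    induction m with
    | zero => intro b; rfl
    | succ m ih =>
        intro b
        show (autEngel x b m)⁻¹ * x (autEngel x b m) = _
        rw [ih b, pow_succ', Module.End.mul_apply, hdapp]
        simp
  have hdn : d ^ n = 0 := by
    ext c
    have := hengel (Additive.toMul c)
    rw [hiter n (Additive.toMul c)] at this
    simpa using this
  have hXq : (1 + d) ^ q = 1 := by
    have hx : x ^ q = 1 := by rw [← hq]; exact pow_orderOf_eq_one x
    have hXpow : ∀ m (c : M), (X ^ m) c = Additive.ofMul ((x ^ m) (Additive.toMul c)) := by
      intro m
      induction m with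
      | zero => intro c; rfl
      | succ m ih =>
          intro c
          rw [pow_succ', Module.End.mul_apply, ih, pow_succ']
          rfl
    have : X ^ q = 1 := by
      ext c
      rw [hXpow q c, hx]
      rfl
    rwa [hd, add_sub_cancel]
  obtain ⟨g, hg⟩ := ring_aux2 d q hqpos hXq (n - 1)
  rw [Nat.sub_add_cancel hn, hdn, zero_mul] at hg
  have happ := congrArg (fun f : Module.End ℤ M => f (Additive.ofMul a)) hg
  simp only [Module.End.mul_apply, LinearMap.zero_apply] at happ
  simp only [hdapp, toMul_ofMul] at happ
  have hcast : ((q : Module.End ℤ M) ^ (n-1)) (Additive.ofMul (a⁻¹ * x a))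
      = (q ^ (n-1) : ℕ) • (Additive.ofMul (a⁻¹ * x a)) := by
    rw [← Nat.cast_pow, Module.End.natCast_apply]
  rw [hcast] at happ
  have : (a⁻¹ * x a) ^ q ^ (n-1) = 1 := by
    rw [← ofMul_pow] at happ
    exact Additive.ofMul.injective happ
  rw [map_pow]
  have h2 : (x a) ^ q ^ (n-1) = a ^ q ^ (n-1) := by
    have := this
    rw [mul_pow, inv_pow] at this
    exact (inv_mul_eq_one.mp this).symm
  exact h2
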